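/- The Lucas hybrid quaternion satisfies the Binet formula L̂_n = α*·α̲·αⁿ + β*·β̲·βⁿ, with α = (1+√5)/2, β = (1-√5)/2, α* = 1 + 𝐢α + εα² + 𝐡α³, β* = 1 + 𝐢β + εβ² + 𝐡β³, α̲ = 1 + iα + jα² + kα³, β̲ = 1 + iβ + jβ² + kβ³. -/

import Mathlib

/-- A hybrid number over a ring `R`: `re + imI·𝐢 + imE·ε + imH·𝐡` with
`𝐢² = -1`, `ε² = 0`, `𝐡² = 1`, `𝐢ε = 1 - 𝐡`, `ε𝐢 = 1 + 𝐡`,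
`𝐢𝐡 = ε + 𝐢`, `𝐡𝐢 = -ε - 𝐢`, `ε𝐡 = -ε`, `𝐡ε = ε`. -/
@[ext]
structure Hybrid (R : Type*) where
  re : R
  imI : R
  imE : R
  imH : R

namespace Hybrid

variable {R : Type*} [Ring R]

instance : Zero (Hybrid R) := ⟨⟨0, 0, 0, 0⟩⟩
instance : One (Hybrid R) := ⟨⟨1, 0, 0, 0⟩⟩
instance : Add (Hybrid R) :=
  ⟨fun x y => ⟨x.re + y.re, x.imI + y.imI, x.imE + y.imE, x.imH + y.imH⟩⟩
instance : Neg (Hybrid R) := ⟨fun x => ⟨-x.re, -x.imI, -x.imE, -x.imH⟩⟩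
instance : Sub (Hybrid R) :=
  ⟨fun x y => ⟨x.re - y.re, x.imI - y.imI, x.imE - y.imE, x.imH - y.imH⟩⟩

/-- Multiplication of hybrid numbers, obtained by bilinear extension of the
multiplication table of the hybrid units (units commute with coefficients). -/
instance : Mul (Hybrid R) := ⟨fun x y =>
  ⟨x.re * y.re - x.imI * y.imI + x.imI * y.imE + x.imE * y.imI + x.imH * y.imH,
   x.re * y.imI + x.imI * y.re + x.imI * y.imH - x.imH * y.imI,
   x.re * y.imE + x.imE * y.re + x.imI * y.imH - x.imH * y.imI
     + x.imH * y.imE - x.imE * y.imH,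
   x.re * y.imH + x.imH * y.re + x.imE * y.imI - x.imI * y.imE⟩⟩

instance {S : Type*} [SMul S R] : SMul S (Hybrid R) :=
  ⟨fun s x => ⟨s • x.re, s • x.imI, s • x.imE, s • x.imH⟩⟩

/-- The hybrid unit `𝐢`. -/
def iu : Hybrid R := ⟨0, 1, 0, 0⟩
/-- The hybrid unit `ε`. -/
def eu : Hybrid R := ⟨0, 0, 1, 0⟩
/-- The hybrid unit `𝐡`. -/
def hu : Hybrid R := ⟨0, 0, 0, 1⟩

end Hybrid

noncomputable section

open Quaternion

/-- Hybrid quaternions: hybrid numbers with quaternion coefficients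
(the quaternion units commute with the hybrid units). -/
abbrev HQ := Hybrid (ℍ[ℝ])

/-- The quaternion unit `i` in the hybrid quaternion algebra. -/
def qi : HQ := ⟨⟨0, 1, 0, 0⟩, 0, 0, 0⟩
/-- The quaternion unit `j` in the hybrid quaternion algebra. -/
def qj : HQ := ⟨⟨0, 0, 1, 0⟩, 0, 0, 0⟩
/-- The quaternion unit `k` in the hybrid quaternion algebra. -/
def qk : HQ := ⟨⟨0, 0, 0, 1⟩, 0, 0, 0⟩

/-- Embedding of the real quaternions into the hybrid quaternions. -/
def eQ (q : ℍ[ℝ]) : HQ := ⟨q, 0, 0, 0⟩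
/-- Embedding of the hybrid numbers into the hybrid quaternions. -/
def eH (z : Hybrid ℝ) : HQ :=
  ⟨⟨z.re, 0, 0, 0⟩, ⟨z.imI, 0, 0, 0⟩, ⟨z.imE, 0, 0, 0⟩, ⟨z.imH, 0, 0, 0⟩⟩

/-- Fibonacci numbers, as real numbers. -/
def F (n : ℕ) : ℝ := Nat.fib n

/-- Lucas numbers, as real numbers. -/
def lucas : ℕ → ℝ
  | 0 => 2
  | 1 => 1
  | n + 2 => lucas (n + 1) + lucas n

/-- The Fibonacci quaternion `F̃ₘ = Fₘ + i F_{m+1} + j F_{m+2} + k F_{m+3}`. -/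
def fq (m : ℕ) : ℍ[ℝ] := ⟨F m, F (m + 1), F (m + 2), F (m + 3)⟩
/-- The Lucas quaternion `L̃ₘ`. -/
def lq (m : ℕ) : ℍ[ℝ] := ⟨lucas m, lucas (m + 1), lucas (m + 2), lucas (m + 3)⟩
/-- The Fibonacci hybrid number `F̆ₘ = Fₘ + 𝐢 F_{m+1} + ε F_{m+2} + 𝐡 F_{m+3}`. -/
def fh (m : ℕ) : Hybrid ℝ := ⟨F m, F (m + 1), F (m + 2), F (m + 3)⟩
/-- The Lucas hybrid number `L̆ₘ`. -/
def lh (m : ℕ) : Hybrid ℝ := ⟨lucas m, lucas (m + 1), lucas (m + 2), lucas (m + 3)⟩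
/-- The Fibonacci hybrid quaternion
`F̂ₙ = F̃ₙ + 𝐢 F̃_{n+1} + ε F̃_{n+2} + 𝐡 F̃_{n+3}
    = F̆ₙ + i F̆_{n+1} + j F̆_{n+2} + k F̆_{n+3}`. -/
def Fhat (n : ℕ) : HQ := ⟨fq n, fq (n + 1), fq (n + 2), fq (n + 3)⟩
/-- The Lucas hybrid quaternion `L̂ₙ`. -/
def Lhat (n : ℕ) : HQ := ⟨lq n, lq (n + 1), lq (n + 2), lq (n + 3)⟩

/-- `α = (1 + √5)/2`. -/
def ga : ℝ := (1 + Real.sqrt 5) / 2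
/-- `β = (1 - √5)/2`. -/
def gb : ℝ := (1 - Real.sqrt 5) / 2

/-- `x* = 1 + 𝐢 x + ε x² + 𝐡 x³` (a hybrid number with real coefficients). -/
def hstar (x : ℝ) : HQ :=
  ⟨1, ⟨x, 0, 0, 0⟩, ⟨x ^ 2, 0, 0, 0⟩, ⟨x ^ 3, 0, 0, 0⟩⟩
/-- `x̲ = 1 + i x + j x² + k x³` (a quaternion with real coefficients). -/
def qund (x : ℝ) : HQ := eQ ⟨1, x, x ^ 2, x ^ 3⟩


lemma ga_sq : ga ^ 2 = ga + 1 := by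
  have h5 : Real.sqrt 5 ^ 2 = 5 := Real.sq_sqrt (by norm_num)
  unfold ga; nlinarith [h5]

lemma gb_sq : gb ^ 2 = gb + 1 := by
  have h5 : Real.sqrt 5 ^ 2 = 5 := Real.sq_sqrt (by norm_num)
  unfold gb; nlinarith [h5]

lemma lucas_binet : ∀ m, lucas m = ga ^ m + gb ^ m := by
  have key : ∀ m, lucas m = ga ^ m + gb ^ m ∧ lucas (m+1) = ga ^ (m+1) + gb ^ (m+1) := by
    intro m
    induction m with
    | zero =>
      constructor
      · norm_num [lucas]
      · show (1:ℝ) = ga ^ 1 + gb ^ 1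
        unfold ga gb; ring
    | succ k ih =>
      refine ⟨ih.2, ?_⟩
      have : lucas (k+2) = lucas (k+1) + lucas k := rfl
      rw [this, ih.1, ih.2]
      have : ga ^ (k+2) = ga^k * ga^2 := by ring
      rw [this, ga_sq]
      have : gb ^ (k+2) = gb^k * gb^2 := by ring
      rw [this, gb_sq]
      ring
  exact fun m => (key m).1

lemma hq_mul (a b : HQ) : a * b =
    ⟨a.re * b.re - a.imI * b.imI + a.imI * b.imE + a.imE * b.imI + a.imH * b.imH,
     a.re * b.imI + a.imI * b.re + a.imI * b.imH - a.imH * b.imI,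
     a.re * b.imE + a.imE * b.re + a.imI * b.imH - a.imH * b.imI
       + a.imH * b.imE - a.imE * b.imH,
     a.re * b.imH + a.imH * b.re + a.imE * b.imI - a.imI * b.imE⟩ := rfl

lemma hq_add (a b : HQ) : a + b =
    ⟨a.re + b.re, a.imI + b.imI, a.imE + b.imE, a.imH + b.imH⟩ := rfl
lemma hq_smul (c : ℝ) (a : HQ) : c • a =
    ⟨c • a.re, c • a.imI, c • a.imE, c • a.imH⟩ := rfl

lemma prod_eq (x : ℝ) : hstar x * qund x =
    ⟨⟨1, x, x^2, x^3⟩, ⟨x, x^2, x^3, x^4⟩, ⟨x^2, x^3, x^4, x^5⟩, ⟨x^3, x^4, x^5, x^6⟩⟩ := by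
  rw [hq_mul]
  apply Hybrid.ext <;>
    apply Quaternion.ext <;>
      simp <;> simp [hstar, qund, eQ] <;> ring

lemma qsmul_mk (c a b d e : ℝ) : (@HSMul.hSMul ℝ ℍ[ℝ] ℍ[ℝ] _ c ⟨a, b, d, e⟩) = ⟨c * a, c * b, c * d, c * e⟩ := rfl

lemma qadd_mk (a b d e a' b' d' e' : ℝ) : (@HAdd.hAdd ℍ[ℝ] ℍ[ℝ] ℍ[ℝ] _ ⟨a, b, d, e⟩ ⟨a', b', d', e'⟩) = ⟨a + a', b + b', d + d', e + e'⟩ := rfl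

/-- Binet formula for Lucas hybrid quaternions,
`L̂ₙ = α* α̲ αⁿ + β* β̲ βⁿ`. -/
theorem lucas_hybrid_quaternion_binet (n : ℕ) :
    Lhat n =
      ga ^ n • (hstar ga * qund ga) + gb ^ n • (hstar gb * qund gb) := by
  rw [prod_eq, prod_eq, hq_smul, hq_smul, hq_add]
  apply Hybrid.ext <;>
    apply Quaternion.ext <;>
      simp only [Lhat, lq, lucas_binet, pow_add, pow_zero, pow_one, one_mul, mul_one,
        Quaternion.re_add, Quaternion.imI_add, Quaternion.imJ_add, Quaternion.imK_add,
        qsmul_mk, qadd_mk,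
        smul_eq_mul] <;>
      ring
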